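/- Let M be a maximal independent set of the Kneser graph on chambers of PG(3,q) and let l be a line. Then the number of chambers of M whose line equals l (the M-weight of l) is one of 0, 1, 2, q+1, 2q+1, or (q+1)^2. -/

import Mathlib

open Submodule

/-- A chamber of `PG(3,q)`: a mutually incident point-line-plane triple,
where points, lines and planes are the 1-, 2- and 3-dimensional subspaces
of a 4-dimensional vector space over `F = GF(q)`. -/
structure Chamber (F : Type) [Field F] where
  pt : Submodule F (Fin 4 → F)
  line : Submodule F (Fin 4 → F)
  plane : Submodule F (Fin 4 → F)
  pt_rank : Module.finrank F pt = 1
  line_rank : Module.finrank F line = 2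
  plane_rank : Module.finrank F plane = 3
  pt_le_line : pt ≤ line
  line_le_plane : line ≤ plane

/-- Two chambers are opposite if each point lies outside the other's plane
and the two lines are skew (intersect trivially). -/
def Chamber.Opp {F : Type} [Field F] (c d : Chamber F) : Prop :=
  ¬ c.pt ≤ d.plane ∧ ¬ d.pt ≤ c.plane ∧ c.line ⊓ d.line = ⊥

/-- An independent set of the Kneser graph on chambers: pairwise non-opposite chambers. -/
def IsIndep {F : Type} [Field F] (M : Set (Chamber F)) : Prop :=
  ∀ c ∈ M, ∀ d ∈ M, ¬ c.Opp d

/-- A maximal independent set of the Kneser graph on chambers. -/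
def IsMaxIndep {F : Type} [Field F] (M : Set (Chamber F)) : Prop :=
  IsIndep M ∧ ∀ c : Chamber F, (∀ d ∈ M, ¬ c.Opp d) → c ∈ M

/-- The `M`-weight of a line `l`: the number of chambers of `M` whose line is `l`. -/
noncomputable def wLine {F : Type} [Field F] (M : Set (Chamber F))
    (l : Submodule F (Fin 4 → F)) : ℕ :=
  {c ∈ M | c.line = l}.ncard

/-- The `M`-weight of an incident line-plane pair. -/
noncomputable def wPair {F : Type} [Field F] (M : Set (Chamber F))
    (l π : Submodule F (Fin 4 → F)) : ℕ :=
  {c ∈ M | c.line = l ∧ c.plane = π}.ncard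

/-- The `M`-weight of an incident point-line pair. -/
noncomputable def wPt {F : Type} [Field F] (M : Set (Chamber F))
    (P l : Submodule F (Fin 4 → F)) : ℕ :=
  {c ∈ M | c.pt = P ∧ c.line = l}.ncard

/-- A `π`-line of `M`: a line of weight `≠ (q+1)^2` lying in a plane `π` such that
the pair `(l, π)` has weight `q+1`. -/
def IsPiLine {F : Type} [Field F] [Fintype F] (M : Set (Chamber F))
    (l : Submodule F (Fin 4 → F)) : Prop :=
  Module.finrank F l = 2 ∧ wLine M l ≠ (Fintype.card F + 1)^2 ∧
    ∃ π : Submodule F (Fin 4 → F), Module.finrank F π = 3 ∧ l ≤ π ∧ wPair M l π = Fintype.card F + 1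

/-- A `P`-line of `M`: a line of weight `≠ (q+1)^2` through a point `P` such that
the pair `(P, l)` has weight `q+1`. -/
def IsPLine {F : Type} [Field F] [Fintype F] (M : Set (Chamber F))
    (l : Submodule F (Fin 4 → F)) : Prop :=
  Module.finrank F l = 2 ∧ wLine M l ≠ (Fintype.card F + 1)^2 ∧
    ∃ P : Submodule F (Fin 4 → F), Module.finrank F P = 1 ∧ P ≤ l ∧ wPt M P l = Fintype.card F + 1


open Module

section AuxCount

set_option linter.unusedSectionVars false

variable {F : Type} [Field F] [Fintype F] {V : Type} [AddCommGroup V] [Module F V]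
  [FiniteDimensional F V]
  [FiniteDimensional F V]

lemma span_of_finrank_one (P : Submodule F V) (h : finrank F P = 1) :
    ∃ v : V, v ≠ 0 ∧ P = span F {v} := by
  have : Nontrivial P := by
    apply Module.nontrivial_of_finrank_pos (R := F); omega
  obtain ⟨⟨v, hvP⟩, hv0⟩ := exists_ne (0 : P)
  have hvne : v ≠ 0 := by simpa [Subtype.ext_iff] using hv0
  refine ⟨v, hvne, ?_⟩
  have hle : span F {v} ≤ P := by simpa [span_le] using hvP
  exact (Submodule.eq_of_le_of_finrank_le hle
    (by rw [h, finrank_span_singleton hvne])).symm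

lemma count_points (W : Submodule F V) (hW : finrank F W = 2) :
    {P : Submodule F V | finrank F P = 1 ∧ P ≤ W}.ncard = Fintype.card F + 1 := by
  classical
  obtain b := finBasisOfFinrankEq F W hW
  set v : V := (b 0 : V) with hv
  set w : V := (b 1 : V) with hw
  have hvW : v ∈ W := (b 0).2
  have hwW : w ∈ W := (b 1).2
  have li : LinearIndependent F (fun i : Fin 2 => ((b i : V))) :=
    b.linearIndependent.map' W.subtype (Submodule.ker_subtype W)
  have key : ∀ s t : F, s • v + t • w = 0 → s = 0 ∧ t = 0 := by
    intro s t h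
    have := Fintype.linearIndependent_iff.mp li ![s, t]
      (by simpa [Fin.sum_univ_two] using h)
    exact ⟨this 0, this 1⟩
  have hv0 : v ≠ 0 := by
    intro h
    have := (key 1 0 (by simp [h])).1
    simp at this
  -- the parametrization
  set f : Option F → Submodule F V := fun o =>
    match o with
    | none => span F {w}
    | some a => span F {v + a • w} with hf
  have hmem : ∀ o, f o ∈ {P : Submodule F V | finrank F P = 1 ∧ P ≤ W} := by
    rintro (_ | a)
    · constructor
      · apply finrank_span_singleton
        intro h
        have := (key 0 1 (by simp [h])).2
        simp at this
      · simpa [f, span_le] using hwW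
    · constructor
      · apply finrank_span_singleton
        intro h
        have := (key 1 a (by simpa using h)).1
        simp at this
      · simp only [f, span_le, Set.singleton_subset_iff, SetLike.mem_coe]
        exact W.add_mem hvW (W.smul_mem _ hwW)
  have hinj : Function.Injective f := by
    rintro (_ | a) (_ | a') h
    · rfl
    · exfalso
      have hmem' : w ∈ span F {v + a' • w} := by
        rw [show span F {v + a' • w} = f (some a') from rfl, ← h]
        exact mem_span_singleton_self w
      obtain ⟨c, hc⟩ := mem_span_singleton.mp hmem'
      have h0 : (-c) • v + (1 - c * a') • w = 0 := by
        have e : (-c) • v + (1 - c * a') • w = w - c • (v + a' • w) := by module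
        rw [e, hc, sub_self]
      have h1 := key _ _ h0
      have hc0 : c = 0 := by have := h1.1; rwa [neg_eq_zero] at this
      have := h1.2
      rw [hc0] at this
      simp at this
    · exfalso
      have hmem' : w ∈ span F {v + a • w} := by
        rw [show span F {v + a • w} = f (some a) from rfl, h]
        exact mem_span_singleton_self w
      obtain ⟨c, hc⟩ := mem_span_singleton.mp hmem'
      have h0 : (-c) • v + (1 - c * a) • w = 0 := by
        have e : (-c) • v + (1 - c * a) • w = w - c • (v + a • w) := by module
        rw [e, hc, sub_self]
      have h1 := key _ _ h0
      have hc0 : c = 0 := by have := h1.1; rwa [neg_eq_zero] at this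
      have := h1.2
      rw [hc0] at this
      simp at this
    · have hmem' : v + a • w ∈ span F {v + a' • w} := by
        rw [show span F {v + a' • w} = f (some a') from rfl, ← h]
        exact mem_span_singleton_self _
      obtain ⟨c, hc⟩ := mem_span_singleton.mp hmem'
      have h0 : (c - 1) • v + (c * a' - a) • w = 0 := by
        have e : (c - 1) • v + (c * a' - a) • w = c • (v + a' • w) - (v + a • w) := by
          module
        rw [e, hc, sub_self]
      have h1 := key _ _ h0
      have hc1 : c = 1 := by have := h1.1; rwa [sub_eq_zero] at this
      have h2 := h1.2
      rw [hc1, one_mul, sub_eq_zero] at h2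
      rw [h2]
  have hsurj : {P : Submodule F V | finrank F P = 1 ∧ P ≤ W} ⊆ Set.range f := by
    rintro P ⟨hP1, hPW⟩
    obtain ⟨u, hu0, rfl⟩ := span_of_finrank_one P hP1
    have huW : u ∈ W := hPW (mem_span_singleton_self u)
    obtain ⟨s, t, hst⟩ : ∃ s t : F, s • v + t • w = u := by
      have hrepr := Basis.sum_repr b ⟨u, huW⟩
      rw [Fin.sum_univ_two] at hrepr
      refine ⟨b.repr ⟨u, huW⟩ 0, b.repr ⟨u, huW⟩ 1, ?_⟩
      have h3 := congrArg (Subtype.val) hrepr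
      rw [hv, hw]
      simpa using h3
    by_cases hs : s = 0
    · refine ⟨none, ?_⟩
      have ht : t ≠ 0 := by
        rintro rfl; apply hu0; rw [← hst, hs]; simp
      simp only [f]
      rw [← hst, hs]
      simp only [zero_smul, zero_add]
      exact (span_singleton_smul_eq (Ne.isUnit ht) w).symm
    · refine ⟨some (s⁻¹ * t), ?_⟩
      simp only [f]
      have hsu : s⁻¹ • (s • v + t • w) = v + (s⁻¹ * t) • w := by
        rw [smul_add, smul_smul, smul_smul, inv_mul_cancel₀ hs, one_smul]
      rw [← hst, ← hsu]
      exact span_singleton_smul_eq (Ne.isUnit (inv_ne_zero hs)) _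
  have heq : {P : Submodule F V | finrank F P = 1 ∧ P ≤ W} = Set.range f := by
    refine le_antisymm hsurj ?_
    rintro _ ⟨o, rfl⟩; exact hmem o
  rw [heq, ← Set.image_univ, Set.ncard_image_of_injective _ hinj, Set.ncard_univ,
    Nat.card_eq_fintype_card, Fintype.card_option]

lemma finrank_map_mkQ_add (l π : Submodule F V) (h : l ≤ π) :
    finrank F (π.map l.mkQ) + finrank F l = finrank F π := by
  have hr : LinearMap.range (l.mkQ ∘ₗ π.subtype) = π.map l.mkQ := by
    rw [LinearMap.range_comp, Submodule.range_subtype]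
  have hk : LinearMap.ker (l.mkQ ∘ₗ π.subtype) = l.comap π.subtype := by
    rw [LinearMap.ker_comp, Submodule.ker_mkQ]
  have := LinearMap.finrank_range_add_finrank_ker (l.mkQ ∘ₗ π.subtype)
  rw [hr, hk] at this
  rwa [(Submodule.comapSubtypeEquivOfLe h).finrank_eq] at this

lemma count_planes (hV : finrank F V = 4) (l : Submodule F V) (hl : finrank F l = 2) :
    {π : Submodule F V | finrank F π = 3 ∧ l ≤ π}.ncard = Fintype.card F + 1 := by
  classical
  have hQ : finrank F (V ⧸ l) = 2 := by
    have := Submodule.finrank_quotient_add_finrank l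
    omega
  have hinj : Set.InjOn (Submodule.map l.mkQ) {π : Submodule F V | finrank F π = 3 ∧ l ≤ π} := by
    rintro π ⟨-, hπ⟩ π' ⟨-, hπ'⟩ h
    have e1 : (π.map l.mkQ).comap l.mkQ = π := by
      rw [Submodule.comap_map_eq, Submodule.ker_mkQ, sup_eq_left.mpr hπ]
    have e2 : (π'.map l.mkQ).comap l.mkQ = π' := by
      rw [Submodule.comap_map_eq, Submodule.ker_mkQ, sup_eq_left.mpr hπ']
    rw [← e1, ← e2, h]
  have himg : (Submodule.map l.mkQ) '' {π : Submodule F V | finrank F π = 3 ∧ l ≤ π}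
      = {P : Submodule F (V ⧸ l) | finrank F P = 1 ∧ P ≤ (⊤ : Submodule F (V ⧸ l))} := by
    ext T
    constructor
    · rintro ⟨π, ⟨h3, hlπ⟩, rfl⟩
      refine ⟨?_, le_top⟩
      have := finrank_map_mkQ_add l π hlπ
      omega
    · rintro ⟨h1, -⟩
      refine ⟨T.comap l.mkQ, ⟨?_, ?_⟩, ?_⟩
      · have hle : l ≤ T.comap l.mkQ := Submodule.le_comap_mkQ l T
        have heq : (T.comap l.mkQ).map l.mkQ = T :=
          Submodule.map_comap_eq_of_surjective (Submodule.mkQ_surjective l) T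
        have := finrank_map_mkQ_add l (T.comap l.mkQ) hle
        rw [heq] at this
        omega
      · exact Submodule.le_comap_mkQ l T
      · exact Submodule.map_comap_eq_of_surjective (Submodule.mkQ_surjective l) T
  have := Set.ncard_image_of_injOn hinj
  rw [himg] at this
  rw [← this]
  exact count_points (⊤ : Submodule F (V ⧸ l)) (by rw [finrank_top]; exact hQ)


end AuxCount


lemma grid_lemma {α β : Type*} {A : Set α} {B : Set β} {S : Set (α × β)} {n : ℕ}
    (hA : A.ncard = n) (hB : B.ncard = n) (hn : 1 ≤ n)
    (hS : S ⊆ A ×ˢ B)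
    (H : ∀ a ∈ A, ∀ b ∈ B, (a, b) ∉ S → ∃ a' ∈ A, ∃ b' ∈ B, a' ≠ a ∧ b' ≠ b ∧
      ∀ x ∈ S, x.1 = a' ∨ x.2 = b') :
    S.ncard = 0 ∨ S.ncard = 1 ∨ S.ncard = 2 ∨ S.ncard = n ∨
      S.ncard = 2 * n - 1 ∨ S.ncard = n ^ 2 := by
  classical
  have hAfin : A.Finite := by
    by_contra h
    rw [Set.Infinite.ncard h] at hA; omega
  have hBfin : B.Finite := by
    by_contra h
    rw [Set.Infinite.ncard h] at hB; omega
  have hABfin : (A ×ˢ B).Finite := hAfin.prod hBfin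
  have hSfin : S.Finite := hABfin.subset hS
  have hprodcard : (A ×ˢ B).ncard = n ^ 2 := by
    have : (A ×ˢ B).ncard = A.ncard * B.ncard := by
      rw [← Nat.card_coe_set_eq, ← Nat.card_coe_set_eq, ← Nat.card_coe_set_eq,
        ← Nat.card_prod]
      exact Nat.card_congr (Equiv.Set.prod A B)
    rw [this, hA, hB, sq]
  have hrowcard : ∀ a : α, ((fun b => (a, b)) '' B).ncard = n := by
    intro a
    rw [Set.ncard_image_of_injective _ (fun x y h => by simpa using h), hB]
  have hcolcard : ∀ b : β, ((fun a => (a, b)) '' A).ncard = n := by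
    intro b
    rw [Set.ncard_image_of_injective _ (fun x y h => by simpa using h), hA]
  have le_two_cases : ∀ p q : α × β, S ⊆ {p, q} →
      S.ncard = 0 ∨ S.ncard = 1 ∨ S.ncard = 2 ∨ S.ncard = n ∨
      S.ncard = 2 * n - 1 ∨ S.ncard = n ^ 2 := by
    intro p q hsub
    have : S.ncard ≤ 2 := by
      calc S.ncard ≤ ({p, q} : Set (α × β)).ncard :=
            Set.ncard_le_ncard hsub (Set.toFinite _)
        _ ≤ 2 := Set.ncard_insert_le _ _ |>.trans (by simp)
    omega
  by_cases hfull : S = A ×ˢ B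
  · rw [hfull, hprodcard]; tauto
  · have hex : ∃ x ∈ A ×ˢ B, x ∉ S := by
      by_contra h
      push_neg at h
      exact hfull (le_antisymm hS h)
    obtain ⟨⟨a₀, b₀⟩, ⟨ha₀, hb₀⟩, hx₀⟩ := hex
    obtain ⟨a₁, ha₁, b₁, hb₁, -, -, hcross⟩ := H a₀ ha₀ b₀ hb₀ hx₀
    by_cases hrow : ∀ x ∈ S, x.1 = a₁
    · by_cases hfr : ∀ b ∈ B, (a₁, b) ∈ S
      · have : S = (fun b => (a₁, b)) '' B := by
          apply le_antisymm
          · intro x hxS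
            exact ⟨x.2, (hS hxS).2, by rw [← hrow x hxS]⟩
          · rintro _ ⟨b, hb, rfl⟩; exact hfr b hb
        rw [this, hrowcard]; tauto
      · push_neg at hfr
        obtain ⟨b₄, hb₄, hnb₄⟩ := hfr
        obtain ⟨a₂, -, b₂, -, ha₂, -, hcross₂⟩ := H a₁ ha₁ b₄ hb₄ hnb₄
        apply le_two_cases (a₁, b₂) (a₁, b₂)
        intro x hxS
        rcases hcross₂ x hxS with h | h
        · exact absurd (hrow x hxS) (h ▸ ha₂)
        · left; exact Prod.ext (hrow x hxS) h
    · push_neg at hrow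
      obtain ⟨x, hxS, hxa⟩ := hrow
      have hxb : x.2 = b₁ := (hcross x hxS).resolve_left hxa
      set a₂ := x.1 with ha₂def
      have ha₂A : a₂ ∈ A := (hS hxS).1
      have hxx : (a₂, b₁) ∈ S := by rw [← hxb]; exact hxS
      by_cases hcol : ∀ y ∈ S, y.2 = b₁
      · by_cases hfc : ∀ a ∈ A, (a, b₁) ∈ S
        · have : S = (fun a => (a, b₁)) '' A := by
            apply le_antisymm
            · intro y hyS
              exact ⟨y.1, (hS hyS).1, by rw [← hcol y hyS]⟩
            · rintro _ ⟨a, ha, rfl⟩; exact hfc a ha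
          rw [this, hcolcard]; tauto
        · push_neg at hfc
          obtain ⟨a₄, ha₄, hna₄⟩ := hfc
          obtain ⟨a₃, -, b₃, -, -, hb₃, hcross₃⟩ := H a₄ ha₄ b₁ hb₁ hna₄
          apply le_two_cases (a₃, b₁) (a₃, b₁)
          intro y hyS
          rcases hcross₃ y hyS with h | h
          · left; exact Prod.ext h (hcol y hyS)
          · exact absurd (hcol y hyS) (h ▸ hb₃)
      · push_neg at hcol
        obtain ⟨y, hyS, hyb⟩ := hcol
        have hya : y.1 = a₁ := (hcross y hyS).resolve_right hyb
        set b₂ := y.2 with hb₂def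
        have hb₂B : b₂ ∈ B := (hS hyS).2
        have hyy : (a₁, b₂) ∈ S := by rw [← hya]; exact hyS
        have hb₂ : b₂ ≠ b₁ := hyb
        have ha₂ : a₂ ≠ a₁ := hxa
        by_cases hc : (∀ b ∈ B, (a₁, b) ∈ S) ∧ ∀ a ∈ A, (a, b₁) ∈ S
        · have hSeq : S = (fun b => (a₁, b)) '' B ∪ (fun a => (a, b₁)) '' A := by
            apply le_antisymm
            · intro z hzS
              rcases hcross z hzS with h | h
              · left; exact ⟨z.2, (hS hzS).2, by rw [← h]⟩
              · right; exact ⟨z.1, (hS hzS).1, by rw [← h]⟩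
            · rintro _ (⟨b, hb, rfl⟩ | ⟨a, ha, rfl⟩)
              · exact hc.1 b hb
              · exact hc.2 a ha
          have hint : ((fun b => (a₁, b)) '' B) ∩ ((fun a => (a, b₁)) '' A)
              = {(a₁, b₁)} := by
            apply le_antisymm
            · rintro z ⟨⟨b, -, rfl⟩, ⟨a, -, hz⟩⟩
              have h2 : b = b₁ := by
                have := congrArg Prod.snd hz
                simpa using this.symm
              simp [h2]
            · rintro z rfl
              exact ⟨⟨b₁, hb₁, rfl⟩, ⟨a₁, ha₁, rfl⟩⟩
          have hu := Set.ncard_union_add_ncard_inter ((fun b => (a₁, b)) '' B)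
            ((fun a => (a, b₁)) '' A) (hBfin.image _) (hAfin.image _)
          rw [hint, hrowcard, hcolcard, Set.ncard_singleton] at hu
          rw [hSeq]
          have : ((fun b => (a₁, b)) '' B ∪ (fun a => (a, b₁)) '' A).ncard = 2 * n - 1 := by
            omega
          rw [this]; tauto
        · rw [not_and_or] at hc
          rcases hc with hc | hc
          · push_neg at hc
            obtain ⟨b₄, hb₄, hnb₄⟩ := hc
            obtain ⟨a', -, b', -, ha', -, hcross'⟩ := H a₁ ha₁ b₄ hb₄ hnb₄
            have hb'eq : b₂ = b' :=
              (hcross' _ hyy).resolve_left (fun h => ha' h.symm)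
            have ha'eq : a₂ = a' :=
              (hcross' _ hxx).resolve_right (fun h => hb₂ (hb'eq.trans h.symm))
            apply le_two_cases (a₁, b₂) (a₂, b₁)
            intro z hzS
            have c1 := hcross z hzS
            have c2 := hcross' z hzS
            rw [← ha'eq, ← hb'eq] at c2
            simp only [Set.mem_insert_iff, Set.mem_singleton_iff]
            rcases c1 with h1 | h1 <;> rcases c2 with h2 | h2
            · exact (ha₂ (h2.symm.trans h1)).elim
            · left; exact Prod.ext h1 h2
            · right; exact Prod.ext h2 h1
            · exact (hb₂ (h2.symm.trans h1)).elim
          · push_neg at hc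
            obtain ⟨a₄, ha₄, hna₄⟩ := hc
            obtain ⟨a', -, b', -, -, hb', hcross'⟩ := H a₄ ha₄ b₁ hb₁ hna₄
            have ha'eq : a₂ = a' :=
              (hcross' _ hxx).resolve_right (fun h => hb' h.symm)
            have hb'eq : b₂ = b' :=
              (hcross' _ hyy).resolve_left (fun h => ha₂ (ha'eq.trans h.symm))
            apply le_two_cases (a₁, b₂) (a₂, b₁)
            intro z hzS
            have c1 := hcross z hzS
            have c2 := hcross' z hzS
            rw [← ha'eq, ← hb'eq] at c2
            simp only [Set.mem_insert_iff, Set.mem_singleton_iff]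
            rcases c1 with h1 | h1 <;> rcases c2 with h2 | h2
            · exact (ha₂ (h2.symm.trans h1)).elim
            · left; exact Prod.ext h1 h2
            · right; exact Prod.ext h2 h1
            · exact (hb₂ (h2.symm.trans h1)).elim

lemma chamber_eq_of {F : Type} [Field F] {c d : Chamber F}
    (h1 : c.pt = d.pt) (h2 : c.line = d.line) (h3 : c.plane = d.plane) : c = d := by
  cases c; cases d; cases h1; cases h2; cases h3; rfl

lemma cross_exists {F : Type} [Field F] {M : Set (Chamber F)} (hM : IsMaxIndep M)
    {l P₀ π₀ : Submodule F (Fin 4 → F)} (hl : finrank F l = 2)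
    (hP₀ : finrank F P₀ = 1) (hP₀l : P₀ ≤ l)
    (hπ₀ : finrank F π₀ = 3) (hlπ₀ : l ≤ π₀)
    (hnot : (⟨P₀, l, π₀, hP₀, hl, hπ₀, hP₀l, hlπ₀⟩ : Chamber F) ∉ M) :
    ∃ P₁ π₁ : Submodule F (Fin 4 → F),
      (finrank F P₁ = 1 ∧ P₁ ≤ l) ∧ (finrank F π₁ = 3 ∧ l ≤ π₁) ∧
      P₁ ≠ P₀ ∧ π₁ ≠ π₀ ∧ ∀ c ∈ M, c.line = l → c.pt = P₁ ∨ c.plane = π₁ := by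
  set c₀ : Chamber F := ⟨P₀, l, π₀, hP₀, hl, hπ₀, hP₀l, hlπ₀⟩ with hc₀
  have hop : ∃ d ∈ M, c₀.Opp d := by
    by_contra h
    push_neg at h
    exact hnot (hM.2 c₀ h)
  obtain ⟨d, hdM, h1, h2, h3⟩ := hop
  have hV4 : finrank F (Fin 4 → F) = 4 := Module.finrank_fin_fun F
  have hsup : l ⊔ d.line = ⊤ := by
    apply Submodule.eq_top_of_finrank_eq
    have h := Submodule.finrank_sup_add_finrank_inf_eq l d.line
    rw [show c₀.line ⊓ d.line = l ⊓ d.line from rfl] at h3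
    rw [h3, finrank_bot, hl, d.line_rank] at h
    omega
  have hsup2 : l ⊔ d.plane = ⊤ := by
    rw [eq_top_iff, ← hsup]
    exact sup_le_sup_left d.line_le_plane l
  have hinf : finrank F ↥(l ⊓ d.plane) = 1 := by
    have h := Submodule.finrank_sup_add_finrank_inf_eq l d.plane
    rw [hsup2, finrank_top, hV4, hl, d.plane_rank] at h
    omega
  have hptl : d.pt ⊓ l = ⊥ := by
    rw [eq_bot_iff]
    refine le_trans (inf_le_inf_right l d.pt_le_line) (le_of_eq ?_)
    rw [inf_comm]
    exact h3
  have hπ₁rank : finrank F ↥(d.pt ⊔ l) = 3 := by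
    have h := Submodule.finrank_sup_add_finrank_inf_eq d.pt l
    rw [hptl, finrank_bot, d.pt_rank, hl] at h
    omega
  refine ⟨l ⊓ d.plane, d.pt ⊔ l, ⟨hinf, inf_le_left⟩, ⟨hπ₁rank, le_sup_right⟩, ?_, ?_, ?_⟩
  · intro h
    apply h1
    show P₀ ≤ d.plane
    rw [← h]
    exact inf_le_right
  · intro h
    apply h2
    show d.pt ≤ π₀
    rw [← h]
    exact le_sup_left
  · intro c hc hcl
    have hno := hM.1 c hc d hdM
    have hC : c.line ⊓ d.line = ⊥ := by rw [hcl]; exact h3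
    have hor : c.pt ≤ d.plane ∨ d.pt ≤ c.plane := by
      by_contra hcon
      push_neg at hcon
      exact hno ⟨hcon.1, hcon.2, hC⟩
    rcases hor with h | h
    · left
      have hle : c.pt ≤ l ⊓ d.plane := le_inf (hcl ▸ c.pt_le_line) h
      exact Submodule.eq_of_le_of_finrank_le hle (le_of_eq (hinf.trans c.pt_rank.symm))
    · right
      have hle : d.pt ⊔ l ≤ c.plane := sup_le h (hcl ▸ c.line_le_plane)
      exact (Submodule.eq_of_le_of_finrank_le hle
        (le_of_eq (c.plane_rank.trans hπ₁rank.symm))).symm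

/-- The `M`-weight of a line is one of `0, 1, 2, q+1, 2q+1, (q+1)^2`. -/
theorem line_weight_cases {F : Type} [Field F] [Fintype F] {q : ℕ}
    (hq : Fintype.card F = q)
    (M : Set (Chamber F)) (hM : IsMaxIndep M)
    (l : Submodule F (Fin 4 → F)) (hl : Module.finrank F l = 2) :
    wLine M l = 0 ∨ wLine M l = 1 ∨ wLine M l = 2 ∨
    wLine M l = q + 1 ∨ wLine M l = 2*q + 1 ∨ wLine M l = (q + 1)^2 := by
  classical
  have hV4 : finrank F (Fin 4 → F) = 4 := Module.finrank_fin_fun F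
  set A := {P : Submodule F (Fin 4 → F) | finrank F P = 1 ∧ P ≤ l} with hAdef
  set B := {π : Submodule F (Fin 4 → F) | finrank F π = 3 ∧ l ≤ π} with hBdef
  set S := (fun c : Chamber F => (c.pt, c.plane)) '' {c ∈ M | c.line = l} with hSdef
  have hinj : Set.InjOn (fun c : Chamber F => (c.pt, c.plane)) {c ∈ M | c.line = l} := by
    rintro c ⟨-, hc⟩ d ⟨-, hd⟩ h
    simp only [Prod.mk.injEq] at h
    exact chamber_eq_of h.1 (hc.trans hd.symm) h.2
  have hw : wLine M l = S.ncard := (Set.ncard_image_of_injOn hinj).symm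
  have hA : A.ncard = q + 1 := by rw [← hq]; exact count_points l hl
  have hB : B.ncard = q + 1 := by rw [← hq]; exact count_planes hV4 l hl
  have hS : S ⊆ A ×ˢ B := by
    rintro _ ⟨c, ⟨hcM, hcl⟩, rfl⟩
    exact ⟨⟨c.pt_rank, hcl ▸ c.pt_le_line⟩, ⟨c.plane_rank, hcl ▸ c.line_le_plane⟩⟩
  have H : ∀ a ∈ A, ∀ b ∈ B, (a, b) ∉ S → ∃ a' ∈ A, ∃ b' ∈ B, a' ≠ a ∧ b' ≠ b ∧
      ∀ x ∈ S, x.1 = a' ∨ x.2 = b' := by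
    rintro P₀ ⟨hP1, hPl⟩ π₀ ⟨hp3, hlp⟩ hns
    have hnot : (⟨P₀, l, π₀, hP1, hl, hp3, hPl, hlp⟩ : Chamber F) ∉ M := by
      intro hmem
      exact hns ⟨_, ⟨hmem, rfl⟩, rfl⟩
    obtain ⟨P₁, π₁, ⟨h1a, h1b⟩, ⟨h2a, h2b⟩, hne1, hne2, hcr⟩ :=
      cross_exists hM hl hP1 hPl hp3 hlp hnot
    refine ⟨P₁, ⟨h1a, h1b⟩, π₁, ⟨h2a, h2b⟩, hne1, hne2, ?_⟩
    rintro _ ⟨c, ⟨hcM, hcl⟩, rfl⟩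
    exact hcr c hcM hcl
  have hcases := grid_lemma hA hB (by omega) hS H
  rw [hw]
  rcases hcases with h | h | h | h | h | h
  · exact Or.inl h
  · exact Or.inr (Or.inl h)
  · exact Or.inr (Or.inr (Or.inl h))
  · exact Or.inr (Or.inr (Or.inr (Or.inl h)))
  · refine Or.inr (Or.inr (Or.inr (Or.inr (Or.inl ?_))))
    omega
  · exact Or.inr (Or.inr (Or.inr (Or.inr (Or.inr h))))
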